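/- Let m, n ≥ 1, Ω ⊂ ℝ^m be a bounded domain with smooth boundary, W ∈ C¹((−∞,1],ℝ) satisfy W(0)=0, W(t)>0 for all t ∈ (−∞,1]\{0}, and W strictly convex, and let u_bd ∈ H^{1/2} ∩ L^∞(∂Ω; ℝⁿ) satisfy u_bd · e ≥ 0 ℋ^{m−1}-a.e. on ∂Ω for a fixed unit vector e ∈ 𝕊^{n−1}. Fix ε > 0 and let u_ε ∈ H¹ ∩ L^∞(Ω; ℝⁿ) be a critical point of E_ε in 𝒜 (i.e. a weak solution of −Δu_ε = (1/ε²) u_ε W'(1 − |u_ε|²) with trace u_bd) such that u_ε · e > 0 a.e. in Ω. Then u_ε is a minimiser of E_ε in 𝒜. -/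

import Mathlib

open MeasureTheory Set Bornology

noncomputable section

/-- Euclidean dot product on `Fin n → ℝ`. -/
def dotR {n : ℕ} (a b : Fin n → ℝ) : ℝ := ∑ j, a j * b j

/-- Squared Euclidean norm on `Fin n → ℝ`. -/
def normSq {n : ℕ} (a : Fin n → ℝ) : ℝ := ∑ j, a j ^ 2

/-- Pointwise (Frobenius) inner product of gradients `∇u · ∇v`. -/
def gradDot {m n : ℕ} (u v : (Fin m → ℝ) → Fin n → ℝ) (x : Fin m → ℝ) : ℝ :=
  ∑ i, ∑ j, fderiv ℝ u x (Pi.single i (1:ℝ)) j * fderiv ℝ v x (Pi.single i (1:ℝ)) j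

/-- `|∇u|²`. -/
def gradSq {m n : ℕ} (u : (Fin m → ℝ) → Fin n → ℝ) (x : Fin m → ℝ) : ℝ := gradDot u u x

/-- Scalar version of `gradDot`. -/
def gradDotS {m : ℕ} (φ ψ : (Fin m → ℝ) → ℝ) (x : Fin m → ℝ) : ℝ :=
  ∑ i, fderiv ℝ φ x (Pi.single i (1:ℝ)) * fderiv ℝ ψ x (Pi.single i (1:ℝ))

/-- `|∇φ|²` for scalar `φ`. -/
def gradSqS {m : ℕ} (φ : (Fin m → ℝ) → ℝ) (x : Fin m → ℝ) : ℝ := gradDotS φ φ x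

/-- `W'`, the (one-sided) derivative of the potential on `(-∞, 1]`. -/
def Wd (W : ℝ → ℝ) : ℝ → ℝ := derivWithin W (Iic (1:ℝ))

/-- The Ginzburg–Landau energy `E_ε`. -/
def GLenergy {m n : ℕ} (W : ℝ → ℝ) (ε : ℝ) (Ω : Set (Fin m → ℝ))
    (u : (Fin m → ℝ) → Fin n → ℝ) : ℝ :=
  ∫ x in Ω, (gradSq u x / 2 + W (1 - normSq (u x)) / (2 * ε ^ 2))

/-- The admissible class `𝒜`: `H¹` maps attaining the boundary data `ubd` on `∂Ω`. -/
def Admissible {m n : ℕ} (Ω : Set (Fin m → ℝ)) (ubd u : (Fin m → ℝ) → Fin n → ℝ) : Prop :=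
  ContDiffOn ℝ 1 u Ω ∧ ContinuousOn u (closure Ω) ∧
  IntegrableOn (gradSq u) Ω ∧ IntegrableOn (fun x => normSq (u x)) Ω ∧
  EqOn u ubd (frontier Ω)

/-- `H¹₀(Ω; ℝⁿ)`. -/
def H10 {m n : ℕ} (Ω : Set (Fin m → ℝ)) (v : (Fin m → ℝ) → Fin n → ℝ) : Prop :=
  ContDiffOn ℝ 1 v Ω ∧ ContinuousOn v (closure Ω) ∧
  IntegrableOn (gradSq v) Ω ∧ IntegrableOn (fun x => normSq (v x)) Ω ∧
  EqOn v 0 (frontier Ω)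

/-- `H¹₀(Ω; ℝ)`. -/
def H10S {m : ℕ} (Ω : Set (Fin m → ℝ)) (φ : (Fin m → ℝ) → ℝ) : Prop :=
  ContDiffOn ℝ 1 φ Ω ∧ ContinuousOn φ (closure Ω) ∧
  IntegrableOn (gradSqS φ) Ω ∧ IntegrableOn (fun x => φ x ^ 2) Ω ∧
  EqOn φ 0 (frontier Ω)

/-- Critical point of `E_ε`: weak solution of `-Δu = ε⁻² u W'(1-|u|²)` in `Ω`. -/
def IsCritical {m n : ℕ} (W : ℝ → ℝ) (ε : ℝ) (Ω : Set (Fin m → ℝ))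
    (u : (Fin m → ℝ) → Fin n → ℝ) : Prop :=
  ∀ v, H10 Ω v →
    (∫ x in Ω, (gradDot u v x - 1 / ε ^ 2 * Wd W (1 - normSq (u x)) * dotR (u x) (v x))) = 0

/-- Minimiser of `E_ε` over `𝒜`. -/
def IsMinimiser {m n : ℕ} (W : ℝ → ℝ) (ε : ℝ) (Ω : Set (Fin m → ℝ))
    (ubd u : (Fin m → ℝ) → Fin n → ℝ) : Prop :=
  Admissible Ω ubd u ∧ ∀ v, Admissible Ω ubd v → GLenergy W ε Ω u ≤ GLenergy W ε Ω v

/-- Orthogonal transformation of `ℝⁿ` (element of `O(n)`). -/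
def IsOrth {n : ℕ} (R : (Fin n → ℝ) →ₗ[ℝ] (Fin n → ℝ)) : Prop :=
  Function.Bijective R ∧ ∀ a b, dotR (R a) (R b) = dotR a b

section Toolkit

variable {m n : ℕ}

lemma pd_meas (f : (Fin m → ℝ) → Fin n → ℝ) (i : Fin m) (j : Fin n) :
    Measurable fun x => fderiv ℝ f x (Pi.single i (1:ℝ)) j :=
  (measurable_pi_apply j).comp (measurable_fderiv_apply_const ℝ f _)

lemma pdS_meas (f : (Fin m → ℝ) → ℝ) (i : Fin m) :
    Measurable fun x => fderiv ℝ f x (Pi.single i (1:ℝ)) :=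
  measurable_fderiv_apply_const ℝ f _

lemma gradDot_meas (u v : (Fin m → ℝ) → Fin n → ℝ) : Measurable (gradDot u v) :=
  Finset.measurable_sum _ fun i _ => Finset.measurable_sum _ fun j _ =>
    ((pd_meas u i j).mul (pd_meas v i j))

lemma gradDotS_meas (u v : (Fin m → ℝ) → ℝ) : Measurable (gradDotS u v) :=
  Finset.measurable_sum _ fun i _ => ((pdS_meas u i).mul (pdS_meas v i))

lemma fderiv_coord {f : (Fin m → ℝ) → Fin n → ℝ} {x : Fin m → ℝ}
    (hf : DifferentiableAt ℝ f x) (j : Fin n) (w : Fin m → ℝ) :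
    fderiv ℝ (fun y => f y j) x w = fderiv ℝ f x w j := by
  have h0 := ((ContinuousLinearMap.proj (R := ℝ) (φ := fun _ : Fin n => ℝ) j).hasFDerivAt.comp
    x hf.hasFDerivAt : _)
  have h : HasFDerivAt (fun y => f y j)
      ((ContinuousLinearMap.proj j).comp (fderiv ℝ f x)) x := by
    have heq : (fun y => f y j) =
        (⇑(ContinuousLinearMap.proj (R := ℝ) (φ := fun _ : Fin n => ℝ) j)) ∘ f := rfl
    rw [heq]; exact h0
  rw [h.fderiv]; rfl

/-- the continuous linear map `a ↦ dotR a e`. -/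
def dotE (e : Fin n → ℝ) : (Fin n → ℝ) →L[ℝ] ℝ := ∑ j, e j • ContinuousLinearMap.proj j

lemma dotE_apply (e a : Fin n → ℝ) : dotE e a = dotR a e := by
  simp [dotE, dotR, mul_comm]

lemma fderiv_dotE {f : (Fin m → ℝ) → Fin n → ℝ} {x : Fin m → ℝ}
    (hf : DifferentiableAt ℝ f x) (e : Fin n → ℝ) (w : Fin m → ℝ) :
    fderiv ℝ (fun y => dotR (f y) e) x w = dotR (fderiv ℝ f x w) e := by
  have h : HasFDerivAt (fun y => dotR (f y) e) ((dotE e).comp (fderiv ℝ f x)) x := by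
    have h0 := ((dotE e).hasFDerivAt.comp x hf.hasFDerivAt : _)
    have : (fun y => dotR (f y) e) = (fun a => dotE e a) ∘ f := by
      funext y; simp [Function.comp, dotE_apply]
    rw [this]; exact h0
  rw [h.fderiv]
  simp [ContinuousLinearMap.comp_apply, dotE_apply]

lemma tangent_le {W : ℝ → ℝ} (hW : ContDiffOn ℝ 1 W (Iic (1:ℝ)))
    (hc : ConvexOn ℝ (Iic (1:ℝ)) W) {s t : ℝ} (hs : s ≤ 1) (ht : t ≤ 1) :
    W t + Wd W t * (s - t) ≤ W s := by
  have hd : DifferentiableWithinAt ℝ W (Iic (1:ℝ)) t :=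
    (hW.differentiableOn one_ne_zero) t ht
  rcases lt_trichotomy s t with h | h | h
  · have h1 := hc.slope_le_derivWithin hs ht h hd
    rw [slope_def_field] at h1
    have h2 : (0:ℝ) < t - s := by linarith
    have h3 := (div_le_iff₀ h2).mp h1
    unfold Wd; nlinarith
  · simp [h]
  · have h1 := hc.derivWithin_le_slope ht hs h hd
    rw [slope_def_field] at h1
    have h2 : (0:ℝ) < s - t := by linarith
    have h3 := (le_div_iff₀ h2).mp h1
    unfold Wd; nlinarith

lemma Wd_contOn {W : ℝ → ℝ} (hW : ContDiffOn ℝ 1 W (Iic (1:ℝ))) :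
    ContinuousOn (Wd W) (Iic (1:ℝ)) :=
  hW.continuousOn_derivWithin (uniqueDiffOn_Iic 1) le_rfl

end Toolkit

section Toolkit2

variable {m n : ℕ} {Ω : Set (Fin m → ℝ)}

lemma normSq_nonneg (a : Fin n → ℝ) : 0 ≤ normSq a :=
  Finset.sum_nonneg fun _ _ => sq_nonneg _

lemma gradSq_nonneg (u : (Fin m → ℝ) → Fin n → ℝ) (x : Fin m → ℝ) : 0 ≤ gradSq u x := by
  unfold gradSq gradDot
  exact Finset.sum_nonneg fun _ _ => Finset.sum_nonneg fun _ _ => mul_self_nonneg _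

lemma gradSqS_nonneg (f : (Fin m → ℝ) → ℝ) (x : Fin m → ℝ) : 0 ≤ gradSqS f x := by
  unfold gradSqS gradDotS
  exact Finset.sum_nonneg fun _ _ => mul_self_nonneg _

lemma abs_dotR_le (a b : Fin n → ℝ) : |dotR a b| ≤ (normSq a + normSq b) / 2 := by
  have h1 : |dotR a b| ≤ ∑ j, |a j * b j| := Finset.abs_sum_le_sum_abs _ _
  have h2 : ∑ j, |a j * b j| ≤ ∑ j, (a j ^ 2 + b j ^ 2) / 2 := by
    refine Finset.sum_le_sum fun j _ => ?_
    rw [abs_mul]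
    nlinarith [sq_nonneg (|a j| - |b j|), sq_abs (a j), sq_abs (b j), abs_nonneg (a j),
      abs_nonneg (b j)]
  calc |dotR a b| ≤ ∑ j, (a j ^ 2 + b j ^ 2) / 2 := h1.trans h2
    _ = (normSq a + normSq b) / 2 := by
        rw [normSq, normSq, ← Finset.sum_add_distrib, ← Finset.sum_div]

lemma abs_gradDot_le (u v : (Fin m → ℝ) → Fin n → ℝ) (x : Fin m → ℝ) :
    |gradDot u v x| ≤ (gradSq u x + gradSq v x) / 2 := by
  have h1 : |gradDot u v x| ≤ ∑ i, ∑ j,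
      |fderiv ℝ u x (Pi.single i (1:ℝ)) j * fderiv ℝ v x (Pi.single i (1:ℝ)) j| :=
    (Finset.abs_sum_le_sum_abs _ _).trans
      (Finset.sum_le_sum fun i _ => Finset.abs_sum_le_sum_abs _ _)
  have h2 : ∀ i : Fin m, ∀ j : Fin n,
      |fderiv ℝ u x (Pi.single i (1:ℝ)) j * fderiv ℝ v x (Pi.single i (1:ℝ)) j| ≤
      (fderiv ℝ u x (Pi.single i (1:ℝ)) j * fderiv ℝ u x (Pi.single i (1:ℝ)) j
        + fderiv ℝ v x (Pi.single i (1:ℝ)) j * fderiv ℝ v x (Pi.single i (1:ℝ)) j) / 2 := by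
    intro i j
    set a := fderiv ℝ u x (Pi.single i (1:ℝ)) j
    set b := fderiv ℝ v x (Pi.single i (1:ℝ)) j
    rw [abs_mul]
    nlinarith [sq_nonneg (|a| - |b|), sq_abs a, sq_abs b, abs_nonneg a, abs_nonneg b]
  have h3 : (∑ i : Fin m, ∑ j : Fin n,
      ((fderiv ℝ u x (Pi.single i (1:ℝ)) j * fderiv ℝ u x (Pi.single i (1:ℝ)) j
        + fderiv ℝ v x (Pi.single i (1:ℝ)) j * fderiv ℝ v x (Pi.single i (1:ℝ)) j) / 2))
      = (gradSq u x + gradSq v x) / 2 := by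
    rw [gradSq, gradSq, gradDot, gradDot, ← Finset.sum_add_distrib, Finset.sum_div]
    exact Finset.sum_congr rfl fun i _ => by
      rw [← Finset.sum_add_distrib, Finset.sum_div]
  calc |gradDot u v x| ≤ _ := h1
    _ ≤ _ := Finset.sum_le_sum fun i _ => Finset.sum_le_sum fun j _ => h2 i j
    _ = (gradSq u x + gradSq v x) / 2 := h3

lemma abs_gradDotS_le (u v : (Fin m → ℝ) → ℝ) (x : Fin m → ℝ) :
    |gradDotS u v x| ≤ (gradSqS u x + gradSqS v x) / 2 := by
  have h1 : |gradDotS u v x| ≤ ∑ i,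
      |fderiv ℝ u x (Pi.single i (1:ℝ)) * fderiv ℝ v x (Pi.single i (1:ℝ))| :=
    Finset.abs_sum_le_sum_abs _ _
  have h2 : ∀ i : Fin m,
      |fderiv ℝ u x (Pi.single i (1:ℝ)) * fderiv ℝ v x (Pi.single i (1:ℝ))| ≤
      (fderiv ℝ u x (Pi.single i (1:ℝ)) * fderiv ℝ u x (Pi.single i (1:ℝ))
        + fderiv ℝ v x (Pi.single i (1:ℝ)) * fderiv ℝ v x (Pi.single i (1:ℝ))) / 2 := by
    intro i
    set a := fderiv ℝ u x (Pi.single i (1:ℝ))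
    set b := fderiv ℝ v x (Pi.single i (1:ℝ))
    rw [abs_mul]
    nlinarith [sq_nonneg (|a| - |b|), sq_abs a, sq_abs b, abs_nonneg a, abs_nonneg b]
  have h3 : (∑ i : Fin m,
      ((fderiv ℝ u x (Pi.single i (1:ℝ)) * fderiv ℝ u x (Pi.single i (1:ℝ))
        + fderiv ℝ v x (Pi.single i (1:ℝ)) * fderiv ℝ v x (Pi.single i (1:ℝ))) / 2))
      = (gradSqS u x + gradSqS v x) / 2 := by
    rw [gradSqS, gradSqS, gradDotS, gradDotS, ← Finset.sum_add_distrib, Finset.sum_div]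
  calc |gradDotS u v x| ≤ _ := h1
    _ ≤ _ := Finset.sum_le_sum fun i _ => h2 i
    _ = (gradSqS u x + gradSqS v x) / 2 := h3

/-- Integrability of a measurable, bounded-on-`Ω` function over a bounded `Ω`. -/
lemma integrableOn_of_bounded (hΩo : IsOpen Ω) (hΩb : IsBounded Ω)
    {f : (Fin m → ℝ) → ℝ} (hf : AEStronglyMeasurable f (volume.restrict Ω))
    {C : ℝ} (hb : ∀ x ∈ Ω, |f x| ≤ C) : IntegrableOn f Ω := by
  haveI : IsFiniteMeasure (volume.restrict Ω) :=
    ⟨by simpa [Measure.restrict_apply_univ] using hΩb.measure_lt_top⟩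
  refine Integrable.mono' (integrable_const C) hf ?_
  rw [ae_restrict_iff' hΩo.measurableSet]
  exact Filter.Eventually.of_forall fun x hx => by simpa using hb x hx

lemma exists_bound_closure (hΩb : IsBounded Ω) {f : (Fin m → ℝ) → ℝ}
    (hf : ContinuousOn f (closure Ω)) : ∃ C : ℝ, 0 ≤ C ∧ ∀ x ∈ closure Ω, |f x| ≤ C := by
  obtain ⟨C, hC⟩ := hΩb.isCompact_closure.exists_bound_of_continuousOn hf
  refine ⟨max C 0, le_max_right _ _, fun x hx => ?_⟩
  have h := hC x hx
  rw [Real.norm_eq_abs] at h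
  exact h.trans (le_max_left _ _)

lemma exists_coord_bound_closure (hΩb : IsBounded Ω) {f : (Fin m → ℝ) → Fin n → ℝ}
    (hf : ContinuousOn f (closure Ω)) :
    ∃ C : ℝ, 0 ≤ C ∧ ∀ x ∈ closure Ω, ∀ j, |f x j| ≤ C := by
  obtain ⟨C, hC⟩ := hΩb.isCompact_closure.exists_bound_of_continuousOn hf
  refine ⟨max C 0, le_max_right _ _, fun x hx j => ?_⟩
  have h1 : |f x j| ≤ ‖f x‖ := by
    simpa [Real.norm_eq_abs] using norm_le_pi_norm (f x) j
  exact h1.trans ((hC x hx).trans (le_max_left _ _))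

end Toolkit2

section StepD

variable {m n : ℕ}

/-- Helper inequality: `(z*a/q)³ ≤ (C/δ²)*a²` when `z² ≤ C`, `0 < δ ≤ q`. -/
lemma div_sq_le {z a q δ C : ℝ} (hδ : 0 < δ) (hq : δ ≤ q) (hz : z ^ 2 ≤ C) :
    (z * a / q) ^ 2 ≤ C / δ ^ 2 * a ^ 2 := by
  have hq0 : 0 < q := hδ.trans_le hq
  have hC : 0 ≤ C := (sq_nonneg z).trans hz
  rw [div_pow, mul_pow, div_le_iff₀ (by positivity)]
  have h2 : δ ^ 2 ≤ q ^ 2 := by nlinarith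
  have h3 : C ≤ C / δ ^ 2 * q ^ 2 := by
    rw [div_mul_eq_mul_div, le_div_iff₀ (by positivity)]; nlinarith
  nlinarith [sq_nonneg a, mul_le_mul_of_nonneg_left h3 (sq_nonneg a)]

set_option maxHeartbeats 1000000 in
lemma stepD {Ω : Set (Fin m → ℝ)} (hΩo : IsOpen Ω) (hΩb : IsBounded Ω)
    {W : ℝ → ℝ} (hW : ContDiffOn ℝ 1 W (Iic (1:ℝ))) {ε : ℝ} (hε : 0 < ε)
    {u : (Fin m → ℝ) → Fin n → ℝ}
    (huC : ∀ v, H10 Ω v →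
      (∫ x in Ω, (gradDot u v x - 1 / ε ^ 2 * Wd W (1 - normSq (u x)) * dotR (u x) (v x))) = 0)
    (hu1 : ContDiffOn ℝ 1 u Ω) (hucl : ContinuousOn u (closure Ω))
    (hugrad : IntegrableOn (gradSq u) Ω)
    {e : Fin n → ℝ} (he : normSq e = 1)
    (hupos : ∀ᵐ x ∂(volume.restrict Ω), 0 < dotR (u x) e)
    {ζ : (Fin m → ℝ) → ℝ} (hζ1 : ContDiffOn ℝ 1 ζ Ω) (hζcl : ContinuousOn ζ (closure Ω))
    (hζ0 : EqOn ζ 0 (frontier Ω)) (hζgrad : IntegrableOn (gradSqS ζ) Ω) :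
    (∫ x in Ω, 1 / ε ^ 2 * Wd W (1 - normSq (u x)) * ζ x ^ 2) ≤ ∫ x in Ω, gradSqS ζ x := by
  have hsub : Ω ⊆ closure Ω := subset_closure
  have hmeasΩ : MeasurableSet Ω := hΩo.measurableSet
  haveI : IsFiniteMeasure (volume.restrict Ω) :=
    ⟨by simpa [Measure.restrict_apply_univ] using hΩb.measure_lt_top⟩
  set φ : (Fin m → ℝ) → ℝ := fun x => dotR (u x) e with hφdef
  set c : (Fin m → ℝ) → ℝ := fun x => Wd W (1 - normSq (u x)) with hcdef
  -- regularity of φ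
  have hφeq : φ = fun x => dotE e (u x) := funext fun x => (dotE_apply e (u x)).symm
  have hφ1 : ContDiffOn ℝ 1 φ Ω := by
    rw [hφeq]; exact (dotE e).contDiff.comp_contDiffOn hu1
  have hφcl : ContinuousOn φ (closure Ω) := by
    rw [hφeq]; exact (dotE e).continuous.comp_continuousOn hucl
  have hudiff : ∀ x ∈ Ω, DifferentiableAt ℝ u x := fun x hx =>
    (hu1.differentiableOn one_ne_zero).differentiableAt (hΩo.mem_nhds hx)
  have hζdiff : ∀ x ∈ Ω, DifferentiableAt ℝ ζ x := fun x hx =>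
    (hζ1.differentiableOn one_ne_zero).differentiableAt (hΩo.mem_nhds hx)
  have hφdiff : ∀ x ∈ Ω, DifferentiableAt ℝ φ x := fun x hx =>
    (hφ1.differentiableOn one_ne_zero).differentiableAt (hΩo.mem_nhds hx)
  -- gradient of φ is controlled by gradient of u
  have hφgradbd : ∀ x ∈ Ω, gradSqS φ x ≤ gradSq u x := by
    intro x hx
    unfold gradSqS gradDotS gradSq gradDot
    refine Finset.sum_le_sum fun i _ => ?_
    have hD : fderiv ℝ φ x (Pi.single i (1:ℝ)) = dotR (fderiv ℝ u x (Pi.single i (1:ℝ))) e :=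
      fderiv_dotE (hudiff x hx) e _
    rw [hD]
    have hcs := Finset.sum_mul_sq_le_sq_mul_sq Finset.univ
      (fun j => fderiv ℝ u x (Pi.single i (1:ℝ)) j) (fun j => e j)
    have heq : normSq e = ∑ j, e j ^ 2 := rfl
    have h1 : (dotR (fderiv ℝ u x (Pi.single i (1:ℝ))) e) ^ 2 ≤
        ∑ j, fderiv ℝ u x (Pi.single i (1:ℝ)) j ^ 2 := by
      have h2 : (∑ j, e j ^ 2) = 1 := by rw [← heq, he]
      calc (dotR (fderiv ℝ u x (Pi.single i (1:ℝ))) e) ^ 2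
          ≤ (∑ j, fderiv ℝ u x (Pi.single i (1:ℝ)) j ^ 2) * (∑ j, e j ^ 2) := hcs
        _ = ∑ j, fderiv ℝ u x (Pi.single i (1:ℝ)) j ^ 2 := by rw [h2, mul_one]
    calc dotR (fderiv ℝ u x (Pi.single i (1:ℝ))) e * dotR (fderiv ℝ u x (Pi.single i (1:ℝ))) e
        = (dotR (fderiv ℝ u x (Pi.single i (1:ℝ))) e) ^ 2 := by ring
      _ ≤ ∑ j, fderiv ℝ u x (Pi.single i (1:ℝ)) j ^ 2 := h1
      _ = ∑ j, fderiv ℝ u x (Pi.single i (1:ℝ)) j * fderiv ℝ u x (Pi.single i (1:ℝ)) j := by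
          refine Finset.sum_congr rfl fun j _ => by ring
  -- φ is nonnegative on Ω (continuity + a.e. positivity)
  have hφΩ0 : ∀ x ∈ Ω, 0 ≤ φ x := by
    intro x hx
    by_contra hneg
    push_neg at hneg
    have hcont : ContinuousAt φ x := (hφ1.continuousOn.continuousAt (hΩo.mem_nhds hx))
    have hU : ∀ᶠ y in nhds x, φ y < 0 ∧ y ∈ Ω :=
      (hcont.eventually_lt continuousAt_const hneg).and (hΩo.eventually_mem hx)
    obtain ⟨U, hUsub, hUopen, hxU⟩ := eventually_nhds_iff.mp hU
    have hUpos : (0:ENNReal) < volume U := hUopen.measure_pos volume ⟨x, hxU⟩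
    have hae := hupos
    rw [ae_restrict_iff' hmeasΩ] at hae
    have h0 : volume {y | ¬ (y ∈ Ω → 0 < dotR (u y) e)} = 0 := hae
    have hUsub2 : U ⊆ {y | ¬ (y ∈ Ω → 0 < dotR (u y) e)} := by
      intro y hy
      have := hUsub y hy
      simp only [Set.mem_setOf_eq]
      push_neg
      exact ⟨this.2, le_of_lt this.1⟩
    exact absurd (measure_mono_null hUsub2 h0) hUpos.ne'
  have hφclos0 : ∀ x ∈ closure Ω, 0 ≤ φ x := by
    intro x hx
    have h2 : Filter.Tendsto φ (nhdsWithin x Ω) (nhds (φ x)) :=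
      ((hφcl x hx).mono_left (nhdsWithin_mono x hsub))
    haveI : (nhdsWithin x Ω).NeBot := mem_closure_iff_nhdsWithin_neBot.mp hx
    exact ge_of_tendsto h2 (eventually_mem_nhdsWithin.mono fun y hy => hφΩ0 y hy)
  -- bounds
  obtain ⟨Cζ, hCζ0, hCζ⟩ := exists_bound_closure hΩb hζcl
  have hnormSqcont : Continuous fun a : Fin n → ℝ => normSq a := by
    unfold normSq; exact continuous_finset_sum _ fun j _ => (continuous_apply j).pow 2
  have h1mcont : ContinuousOn (fun x => 1 - normSq (u x)) (closure Ω) :=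
    continuousOn_const.sub (hnormSqcont.comp_continuousOn hucl)
  have hccl : ContinuousOn c (closure Ω) := by
    rw [hcdef]
    exact (Wd_contOn hW).comp h1mcont fun x hx => by
      simp only [Set.mem_Iic]
      nlinarith [normSq_nonneg (u x)]
  obtain ⟨Cc, hCc0, hCc⟩ := exists_bound_closure hΩb hccl
  obtain ⟨Cφ, hCφ0, hCφ⟩ := exists_bound_closure hΩb hφcl
  -- integrability of gradSqS φ
  have hφgradint : IntegrableOn (gradSqS φ) Ω := by
    refine Integrable.mono' hugrad (gradDotS_meas φ φ).aestronglyMeasurable ?_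
    rw [ae_restrict_iff' hmeasΩ]
    exact Filter.Eventually.of_forall fun x hx => by
      rw [Real.norm_eq_abs, abs_of_nonneg (gradSqS_nonneg φ x)]; exact hφgradbd x hx
  -- the key inequality for each δ = 1/(k+1)
  have key : ∀ k : ℕ,
      (∫ x in Ω, 1 / ε ^ 2 * c x * (ζ x ^ 2 / (φ x + ((k:ℝ)+1)⁻¹) * φ x)) ≤
        ∫ x in Ω, gradSqS ζ x := by
    intro k
    set δ : ℝ := ((k:ℝ)+1)⁻¹ with hδdef
    have hδpos : 0 < δ := by positivity
    set ψ : (Fin m → ℝ) → ℝ := fun x => ζ x ^ 2 / (φ x + δ) with hψdef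
    have hden : ∀ x ∈ closure Ω, 0 < φ x + δ := fun x hx =>
      add_pos_of_nonneg_of_pos (hφclos0 x hx) hδpos
    have hψ1 : ContDiffOn ℝ 1 ψ Ω :=
      (hζ1.pow 2).div (hφ1.add contDiffOn_const) fun x hx => (hden x (hsub hx)).ne'
    have hψcl : ContinuousOn ψ (closure Ω) :=
      (hζcl.pow 2).div (hφcl.add continuousOn_const) fun x hx => (hden x hx).ne'
    have hψdiff : ∀ x ∈ Ω, DifferentiableAt ℝ ψ x := fun x hx =>
      (hψ1.differentiableOn one_ne_zero).differentiableAt (hΩo.mem_nhds hx)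
    have hψbd : ∀ x ∈ Ω, |ψ x| ≤ Cζ ^ 2 / δ := by
      intro x hx
      have h1 : ζ x ^ 2 ≤ Cζ ^ 2 := by
        have h := hCζ x (hsub hx)
        nlinarith [abs_nonneg (ζ x), sq_abs (ζ x)]
      have h2 : δ ≤ φ x + δ := le_add_of_nonneg_left (hφΩ0 x hx)
      rw [hψdef, abs_of_nonneg (div_nonneg (sq_nonneg _) (hden x (hsub hx)).le)]
      exact div_le_div₀ (by positivity) h1 hδpos h2
    -- derivative formula for ψ
    have hψder : ∀ x ∈ Ω, ∀ w,
        fderiv ℝ ψ x w = 2 * ζ x * fderiv ℝ ζ x w / (φ x + δ)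
          - ζ x ^ 2 * fderiv ℝ φ x w / (φ x + δ) ^ 2 := by
      intro x hx w
      have hqne : φ x + δ ≠ 0 := (hden x (hsub hx)).ne'
      have hz := (hζdiff x hx).hasFDerivAt
      have hφx := (hφdiff x hx).hasFDerivAt
      have hq : HasFDerivAt (fun y => φ y + δ) (fderiv ℝ φ x) x := hφx.add_const δ
      have hinv : HasFDerivAt (fun y => (φ y + δ)⁻¹)
          ((-(((φ x + δ)) ^ 2)⁻¹) • fderiv ℝ φ x) x :=
        (hasDerivAt_inv hqne).comp_hasFDerivAt x hq
      have hnum : HasFDerivAt (fun y => ζ y * ζ y)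
          (ζ x • fderiv ℝ ζ x + ζ x • fderiv ℝ ζ x) x := hz.mul hz
      have hprod := hnum.mul hinv
      have heqfun : ψ = fun y => (ζ y * ζ y) * (φ y + δ)⁻¹ := by
        funext y; simp only [hψdef]; ring
      rw [heqfun, show (fun y => ζ y * ζ y * (φ y + δ)⁻¹) =
          ((fun y => ζ y * ζ y) * fun y => (φ y + δ)⁻¹) from rfl, hprod.fderiv]
      simp only [ContinuousLinearMap.add_apply, ContinuousLinearMap.smul_apply,
        Pi.smul_apply, smul_eq_mul]
      field_simp
      ring
    -- pointwise inequality  `∇φ·∇ψ ≤ |∇ζ|²`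
    have hpt : ∀ x ∈ Ω, gradDotS φ ψ x ≤ gradSqS ζ x := by
      intro x hx
      unfold gradSqS gradDotS
      refine Finset.sum_le_sum fun i _ => ?_
      set a := fderiv ℝ ζ x (Pi.single i (1:ℝ)) with ha
      set b := fderiv ℝ φ x (Pi.single i (1:ℝ)) with hb
      have hq : 0 < φ x + δ := hden x (hsub hx)
      rw [hψder x hx]
      set q := φ x + δ
      have h1 : b * (2 * ζ x * a / q - ζ x ^ 2 * b / q ^ 2) ≤ a * a := by
        rw [div_sub_div _ _ (by positivity : q ≠ 0) (by positivity : q^2 ≠ 0)]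
        rw [← mul_div_assoc]
        rw [div_le_iff₀ (by positivity : (0:ℝ) < q * q ^ 2)]
        nlinarith [sq_nonneg (a * q - ζ x * b), sq_nonneg q, hq]
      exact h1
    -- gradient bound for ψ
    set K1 : ℝ := 8 * Cζ ^ 2 / δ ^ 2 with hK1
    set K2 : ℝ := 2 * Cζ ^ 4 / (δ ^ 2) ^ 2 with hK2
    have hK1p : 0 ≤ K1 := by positivity
    have hK2p : 0 ≤ K2 := by positivity
    have hψgradbd : ∀ x ∈ Ω, gradSqS ψ x ≤ K1 * gradSqS ζ x + K2 * gradSq u x := by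
      intro x hx
      have hmid : gradSqS ψ x ≤ K1 * gradSqS ζ x + K2 * gradSqS φ x := by
        unfold gradSqS gradDotS
        rw [Finset.mul_sum, Finset.mul_sum, ← Finset.sum_add_distrib]
        refine Finset.sum_le_sum fun i _ => ?_
        set a := fderiv ℝ ζ x (Pi.single i (1:ℝ))
        set b := fderiv ℝ φ x (Pi.single i (1:ℝ))
        have hq : 0 < φ x + δ := hden x (hsub hx)
        have hqd : δ ≤ φ x + δ := le_add_of_nonneg_left (hφΩ0 x hx)
        rw [hψder x hx]
        set q := φ x + δ
        have hζsq : ζ x ^ 2 ≤ Cζ ^ 2 := by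
          have h := hCζ x (hsub hx)
          nlinarith [abs_nonneg (ζ x), sq_abs (ζ x)]
        have hA : (2 * ζ x * a / q) ^ 2 ≤ 4 * Cζ ^ 2 / δ ^ 2 * a ^ 2 := by
          have := div_sq_le (z := 2 * ζ x) (a := a) hδpos hqd (by nlinarith : (2*ζ x)^2 ≤ 4 * Cζ^2)
          simpa using this
        have hB : (ζ x ^ 2 * b / q ^ 2) ^ 2 ≤ Cζ ^ 4 / (δ ^ 2) ^ 2 * b ^ 2 := by
          have hq2 : δ ^ 2 ≤ q ^ 2 := by nlinarith
          have := div_sq_le (z := ζ x ^ 2) (a := b) (by positivity) hq2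
            (by nlinarith : (ζ x ^ 2) ^ 2 ≤ Cζ ^ 4)
          simpa using this
        have hsum : (2 * ζ x * a / q - ζ x ^ 2 * b / q ^ 2) *
            (2 * ζ x * a / q - ζ x ^ 2 * b / q ^ 2)
            ≤ 2 * (2 * ζ x * a / q) ^ 2 + 2 * (ζ x ^ 2 * b / q ^ 2) ^ 2 := by
          nlinarith [sq_nonneg (2 * ζ x * a / q + ζ x ^ 2 * b / q ^ 2)]
        calc (2 * ζ x * a / q - ζ x ^ 2 * b / q ^ 2) *
            (2 * ζ x * a / q - ζ x ^ 2 * b / q ^ 2)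
            ≤ 2 * (2 * ζ x * a / q) ^ 2 + 2 * (ζ x ^ 2 * b / q ^ 2) ^ 2 := hsum
          _ ≤ 2 * (4 * Cζ ^ 2 / δ ^ 2 * a ^ 2) + 2 * (Cζ ^ 4 / (δ ^ 2) ^ 2 * b ^ 2) := by
              gcongr
          _ = K1 * (a * a) + K2 * (b * b) := by rw [hK1, hK2]; ring
      calc gradSqS ψ x ≤ K1 * gradSqS ζ x + K2 * gradSqS φ x := hmid
        _ ≤ K1 * gradSqS ζ x + K2 * gradSq u x := by
            have := hφgradbd x hx
            nlinarith
    have hψgradint : IntegrableOn (gradSqS ψ) Ω := by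
      refine Integrable.mono' ((hζgrad.const_mul K1).add (hugrad.const_mul K2))
        (gradDotS_meas ψ ψ).aestronglyMeasurable ?_
      rw [ae_restrict_iff' hmeasΩ]
      exact Filter.Eventually.of_forall fun x hx => by
        rw [Real.norm_eq_abs, abs_of_nonneg (gradSqS_nonneg ψ x)]; exact hψgradbd x hx
    have hψsqint : IntegrableOn (fun x => ψ x ^ 2) Ω := by
      refine integrableOn_of_bounded hΩo hΩb
        (((hψ1.continuousOn).pow 2).aestronglyMeasurable hmeasΩ) (C := (Cζ^2/δ)^2) ?_
      intro x hx
      have := hψbd x hx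
      rw [abs_of_nonneg (sq_nonneg _)]
      nlinarith [abs_nonneg (ψ x), sq_abs (ψ x)]
    -- the vector test function
    set vt : (Fin m → ℝ) → Fin n → ℝ := fun x => ψ x • e with hvt
    have hvtder : ∀ x ∈ Ω, ∀ w, fderiv ℝ vt x w = fderiv ℝ ψ x w • e := by
      intro x hx w
      have h := ((hψdiff x hx).hasFDerivAt.smul_const e)
      rw [hvt, h.fderiv]
      rfl
    have hvtgradeq : ∀ x ∈ Ω, gradSq vt x = gradSqS ψ x := by
      intro x hx
      unfold gradSq gradDot gradSqS gradDotS
      refine Finset.sum_congr rfl fun i _ => ?_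
      rw [hvtder x hx]
      have : ∀ j, (fderiv ℝ ψ x (Pi.single i (1:ℝ)) • e) j *
          (fderiv ℝ ψ x (Pi.single i (1:ℝ)) • e) j
          = fderiv ℝ ψ x (Pi.single i (1:ℝ)) * fderiv ℝ ψ x (Pi.single i (1:ℝ)) * e j ^ 2 := by
        intro j; simp only [Pi.smul_apply, smul_eq_mul]; ring
      rw [Finset.sum_congr rfl fun j _ => this j, ← Finset.mul_sum]
      have : (∑ j, e j ^ 2) = 1 := he
      rw [this, mul_one]
    have hvtH10 : H10 Ω vt := by
      refine ⟨hψ1.smul contDiffOn_const, hψcl.smul continuousOn_const, ?_, ?_, ?_⟩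
      · exact (integrable_congr ((ae_restrict_iff' hmeasΩ).mpr
          (Filter.Eventually.of_forall fun x hx => (hvtgradeq x hx)))).mpr hψgradint
      · have heq : ∀ x, normSq (vt x) = ψ x ^ 2 := by
          intro x
          unfold normSq
          rw [hvt]
          have : ∀ j, (ψ x • e) j ^ 2 = ψ x ^ 2 * e j ^ 2 := by
            intro j; simp only [Pi.smul_apply, smul_eq_mul]; ring
          rw [Finset.sum_congr rfl fun j _ => this j, ← Finset.mul_sum]
          have h2 : (∑ j, e j ^ 2) = 1 := he
          rw [h2, mul_one]
        exact (integrable_congr (Filter.Eventually.of_forall fun x => heq x)).mpr hψsqint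
      · intro x hx
        have hζx : ζ x = 0 := hζ0 hx
        have hψx : ψ x = 0 := by rw [hψdef]; simp [hζx]
        show vt x = 0
        rw [hvt]
        simp [hψx]
    -- apply criticality
    have hcrit := huC vt hvtH10
    -- rewrite the integrand
    have hint_eq : ∀ x ∈ Ω,
        gradDot u vt x - 1 / ε ^ 2 * Wd W (1 - normSq (u x)) * dotR (u x) (vt x)
          = gradDotS φ ψ x - 1 / ε ^ 2 * c x * (ψ x * φ x) := by
      intro x hx
      have h1 : gradDot u vt x = gradDotS φ ψ x := by
        unfold gradDot gradDotS
        refine Finset.sum_congr rfl fun i _ => ?_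
        have hb : fderiv ℝ φ x (Pi.single i (1:ℝ))
            = dotR (fderiv ℝ u x (Pi.single i (1:ℝ))) e := fderiv_dotE (hudiff x hx) e _
        rw [hvtder x hx, hb]
        unfold dotR
        rw [Finset.sum_mul]
        refine Finset.sum_congr rfl fun j _ => ?_
        simp only [Pi.smul_apply, smul_eq_mul]
        ring
      have h2 : dotR (u x) (vt x) = ψ x * φ x := by
        rw [hvt, hφdef]
        unfold dotR
        rw [Finset.mul_sum]
        refine Finset.sum_congr rfl fun j _ => ?_
        simp only [Pi.smul_apply, smul_eq_mul]
        ring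
      rw [h1, h2, hcdef]
    have hcrit2 : (∫ x in Ω, (gradDotS φ ψ x - 1 / ε ^ 2 * c x * (ψ x * φ x))) = 0 := by
      rw [← hcrit]
      exact setIntegral_congr_fun hmeasΩ fun x hx => (hint_eq x hx).symm
    have hI1 : IntegrableOn (gradDotS φ ψ) Ω := by
      refine Integrable.mono' ((hφgradint.add hψgradint).div_const 2)
        (gradDotS_meas φ ψ).aestronglyMeasurable ?_
      exact Filter.Eventually.of_forall fun x => by
        simpa using abs_gradDotS_le φ ψ x
    have hI2 : IntegrableOn (fun x => 1 / ε ^ 2 * c x * (ψ x * φ x)) Ω := by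
      refine integrableOn_of_bounded hΩo hΩb
        (((continuousOn_const.mul (hccl.mono hsub)).mul
          ((hψ1.continuousOn).mul (hφcl.mono hsub))).aestronglyMeasurable hmeasΩ)
        (C := 1 / ε ^ 2 * Cc * (Cζ ^ 2 / δ * Cφ)) ?_
      intro x hx
      have hc' := hCc x (hsub hx)
      have hψ' := hψbd x hx
      have hφ' := hCφ x (hsub hx)
      rw [abs_mul, abs_mul, abs_mul, abs_of_nonneg (by positivity : (0:ℝ) ≤ 1 / ε ^ 2)]
      have hd : 0 ≤ Cζ ^ 2 / δ := by positivity
      gcongr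
    have hAeq : (∫ x in Ω, gradDotS φ ψ x) = ∫ x in Ω, 1 / ε ^ 2 * c x * (ψ x * φ x) := by
      have h3 : (∫ x in Ω, (gradDotS φ ψ x - 1 / ε ^ 2 * c x * (ψ x * φ x)))
          = (∫ x in Ω, gradDotS φ ψ x) - ∫ x in Ω, 1 / ε ^ 2 * c x * (ψ x * φ x) :=
        integral_sub hI1 hI2
      rw [hcrit2] at h3
      linarith
    have hmono : (∫ x in Ω, gradDotS φ ψ x) ≤ ∫ x in Ω, gradSqS ζ x :=
      setIntegral_mono_on hI1 hζgrad hmeasΩ hpt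
    calc (∫ x in Ω, 1 / ε ^ 2 * c x * (ψ x * φ x)) = ∫ x in Ω, gradDotS φ ψ x := hAeq.symm
      _ ≤ ∫ x in Ω, gradSqS ζ x := hmono
  -- dominated convergence
  set F : ℕ → (Fin m → ℝ) → ℝ :=
    fun k x => 1 / ε ^ 2 * c x * (ζ x ^ 2 / (φ x + ((k:ℝ)+1)⁻¹) * φ x) with hF
  have hFmeas : ∀ k, AEStronglyMeasurable (F k) (volume.restrict Ω) := by
    intro k
    have hd : ∀ x ∈ Ω, φ x + ((k:ℝ)+1)⁻¹ ≠ 0 := fun x hx =>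
      (add_pos_of_nonneg_of_pos (hφΩ0 x hx) (by positivity)).ne'
    exact ((continuousOn_const.mul (hccl.mono hsub)).mul
      ((((hζ1.continuousOn.pow 2).div ((hφ1.continuousOn).add continuousOn_const) hd)).mul
        (hφ1.continuousOn))).aestronglyMeasurable hmeasΩ
  have hbound : ∀ k, ∀ᵐ x ∂(volume.restrict Ω), ‖F k x‖ ≤ 1 / ε ^ 2 * Cc * Cζ ^ 2 := by
    intro k
    rw [ae_restrict_iff' hmeasΩ]
    refine Filter.Eventually.of_forall fun x hx => ?_
    have hδp : (0:ℝ) < ((k:ℝ)+1)⁻¹ := by positivity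
    have hqp : 0 < φ x + ((k:ℝ)+1)⁻¹ := add_pos_of_nonneg_of_pos (hφΩ0 x hx) hδp
    have ht0 : 0 ≤ ζ x ^ 2 / (φ x + ((k:ℝ)+1)⁻¹) * φ x :=
      mul_nonneg (div_nonneg (sq_nonneg _) hqp.le) (hφΩ0 x hx)
    have htle : ζ x ^ 2 / (φ x + ((k:ℝ)+1)⁻¹) * φ x ≤ ζ x ^ 2 := by
      have h1 : ζ x ^ 2 / (φ x + ((k:ℝ)+1)⁻¹) * φ x
          ≤ ζ x ^ 2 / (φ x + ((k:ℝ)+1)⁻¹) * (φ x + ((k:ℝ)+1)⁻¹) :=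
        mul_le_mul_of_nonneg_left (by linarith) (div_nonneg (sq_nonneg _) hqp.le)
      rwa [div_mul_cancel₀ _ hqp.ne'] at h1
    have hζsq : ζ x ^ 2 ≤ Cζ ^ 2 := by
      have h := hCζ x (hsub hx)
      nlinarith [abs_nonneg (ζ x), sq_abs (ζ x)]
    have hc' := hCc x (hsub hx)
    simp only [hF, Real.norm_eq_abs]
    rw [abs_mul, abs_mul, abs_of_nonneg (by positivity : (0:ℝ) ≤ 1 / ε ^ 2),
      abs_of_nonneg ht0]
    have h5 : ζ x ^ 2 / (φ x + ((k:ℝ)+1)⁻¹) * φ x ≤ Cζ ^ 2 := htle.trans hζsq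
    have h6 : |c x| ≤ Cc := hc'
    gcongr
  have hbint : Integrable (fun _ : Fin m → ℝ => 1 / ε ^ 2 * Cc * Cζ ^ 2)
      (volume.restrict Ω) := integrable_const _
  have hconv : ∀ᵐ x ∂(volume.restrict Ω),
      Filter.Tendsto (fun k => F k x) Filter.atTop (nhds (1 / ε ^ 2 * c x * ζ x ^ 2)) := by
    filter_upwards [hupos] with x hx
    have hφx : 0 < φ x := hx
    have hδ0 : Filter.Tendsto (fun k : ℕ => ((k:ℝ)+1)⁻¹) Filter.atTop (nhds 0) := by
      have := tendsto_one_div_add_atTop_nhds_zero_nat (𝕜 := ℝ)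
      simpa [one_div] using this
    have h1 : Filter.Tendsto (fun k : ℕ => φ x + ((k:ℝ)+1)⁻¹) Filter.atTop
        (nhds (φ x + 0)) := tendsto_const_nhds.add hδ0
    have h2 : Filter.Tendsto (fun k : ℕ => ζ x ^ 2 / (φ x + ((k:ℝ)+1)⁻¹) * φ x)
        Filter.atTop (nhds (ζ x ^ 2 / (φ x + 0) * φ x)) :=
      (Filter.Tendsto.div tendsto_const_nhds h1 (by simpa using hφx.ne')).mul
        tendsto_const_nhds
    have h3 : ζ x ^ 2 / (φ x + 0) * φ x = ζ x ^ 2 := by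
      rw [add_zero]; field_simp
    have h4 := h2.const_mul (1 / ε ^ 2 * c x)
    rw [h3] at h4
    simp only [hF]
    exact h4
  have hDCT := MeasureTheory.tendsto_integral_of_dominated_convergence _ hFmeas hbint
    hbound hconv
  exact le_of_tendsto hDCT (Filter.Eventually.of_forall key)

end StepD

set_option maxHeartbeats 1000000 in
/-- Theorem 1.3, minimality: a critical point of `E_ε` in `𝒜` which is
positive in the direction `e` inside `Ω` is a minimiser of `E_ε` in `𝒜`. -/
theorem statement_4 {m n : ℕ} (hm : 1 ≤ m) (hn : 1 ≤ n)
    (Ω : Set (Fin m → ℝ)) (hΩo : IsOpen Ω) (hΩc : IsConnected Ω) (hΩb : IsBounded Ω)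
    (W : ℝ → ℝ) (hW : ContDiffOn ℝ 1 W (Iic (1:ℝ))) (hW0 : W 0 = 0)
    (hWpos : ∀ t ∈ Iic (1:ℝ), t ≠ 0 → 0 < W t)
    (hWconv : StrictConvexOn ℝ (Iic (1:ℝ)) W)
    (ubd : (Fin m → ℝ) → Fin n → ℝ) (hubdL : IsBounded (ubd '' frontier Ω))
    (e : Fin n → ℝ) (he : normSq e = 1)
    (hbd : ∀ᵐ x ∂((μH[(m : ℝ) - 1]).restrict (frontier Ω)), 0 ≤ dotR (ubd x) e)
    (ε : ℝ) (hε : 0 < ε)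
    (u : (Fin m → ℝ) → Fin n → ℝ)
    (huA : Admissible Ω ubd u) (huL : IsBounded (u '' Ω))
    (huC : IsCritical W ε Ω u)
    (hupos : ∀ᵐ x ∂(volume.restrict Ω), 0 < dotR (u x) e) :
    IsMinimiser W ε Ω ubd u := by
  obtain ⟨hu1, hucl, hugrad, husq, hubdeq⟩ := huA
  have hmeasΩ : MeasurableSet Ω := hΩo.measurableSet
  have hsub : Ω ⊆ closure Ω := subset_closure
  haveI : IsFiniteMeasure (volume.restrict Ω) :=
    ⟨by simpa [Measure.restrict_apply_univ] using hΩb.measure_lt_top⟩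
  have hε2 : (0:ℝ) < ε ^ 2 := by positivity
  refine ⟨⟨hu1, hucl, hugrad, husq, hubdeq⟩, ?_⟩
  intro v hvA
  obtain ⟨hv1, hvcl, hvgrad, hvsq, hvbdeq⟩ := hvA
  set c : (Fin m → ℝ) → ℝ := fun x => Wd W (1 - normSq (u x)) with hcdef
  set z : (Fin m → ℝ) → Fin n → ℝ := fun x => v x - u x with hzdef
  -- differentiability
  have hudiff : ∀ x ∈ Ω, DifferentiableAt ℝ u x := fun x hx =>
    (hu1.differentiableOn one_ne_zero).differentiableAt (hΩo.mem_nhds hx)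
  have hvdiff : ∀ x ∈ Ω, DifferentiableAt ℝ v x := fun x hx =>
    (hv1.differentiableOn one_ne_zero).differentiableAt (hΩo.mem_nhds hx)
  have hzdiff : ∀ x ∈ Ω, DifferentiableAt ℝ z x := fun x hx =>
    (hvdiff x hx).sub (hudiff x hx)
  have hfz : ∀ x ∈ Ω, fderiv ℝ z x = fderiv ℝ v x - fderiv ℝ u x := fun x hx =>
    fderiv_sub (hvdiff x hx) (hudiff x hx)
  have hzcl : ContinuousOn z (closure Ω) := hvcl.sub hucl
  have hz1 : ContDiffOn ℝ 1 z Ω := hv1.sub hu1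
  have hz0 : EqOn z 0 (frontier Ω) := fun x hx => by
    show v x - u x = 0
    rw [hvbdeq hx, hubdeq hx, sub_self]
  -- gradient bound and integrability for z
  have hzgradbd : ∀ x ∈ Ω, gradSq z x ≤ 2 * (gradSq u x + gradSq v x) := by
    intro x hx
    unfold gradSq gradDot
    rw [← Finset.sum_add_distrib, Finset.mul_sum]
    refine Finset.sum_le_sum fun i _ => ?_
    rw [← Finset.sum_add_distrib, Finset.mul_sum]
    refine Finset.sum_le_sum fun j _ => ?_
    rw [hfz x hx]
    simp only [ContinuousLinearMap.coe_sub', Pi.sub_apply]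
    nlinarith [sq_nonneg (fderiv ℝ u x (Pi.single i (1:ℝ)) j
      + fderiv ℝ v x (Pi.single i (1:ℝ)) j)]
  have hzgradint : IntegrableOn (gradSq z) Ω := by
    refine Integrable.mono' ((hugrad.add hvgrad).const_mul 2)
      (gradDot_meas z z).aestronglyMeasurable ?_
    rw [ae_restrict_iff' hmeasΩ]
    exact Filter.Eventually.of_forall fun x hx => by
      rw [Real.norm_eq_abs, abs_of_nonneg (gradSq_nonneg z x)]
      exact hzgradbd x hx
  -- normSq z integrable
  have hnormSqcont : Continuous fun a : Fin n → ℝ => normSq a := by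
    unfold normSq; exact continuous_finset_sum _ fun j _ => (continuous_apply j).pow 2
  have hzsqcl : ContinuousOn (fun x => normSq (z x)) (closure Ω) :=
    hnormSqcont.comp_continuousOn hzcl
  obtain ⟨Cz, hCz0, hCz⟩ := exists_bound_closure hΩb hzsqcl
  have hzsqint : IntegrableOn (fun x => normSq (z x)) Ω :=
    integrableOn_of_bounded hΩo hΩb ((hzsqcl.mono hsub).aestronglyMeasurable hmeasΩ)
      (fun x hx => hCz x (hsub hx))
  have hzH10 : H10 Ω z := ⟨hz1, hzcl, hzgradint, hzsqint, hz0⟩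
  -- continuity and bounds for c and the W-terms
  have h1mu : ContinuousOn (fun x => 1 - normSq (u x)) (closure Ω) :=
    continuousOn_const.sub (hnormSqcont.comp_continuousOn hucl)
  have h1mv : ContinuousOn (fun x => 1 - normSq (v x)) (closure Ω) :=
    continuousOn_const.sub (hnormSqcont.comp_continuousOn hvcl)
  have hmapsu : ∀ x ∈ closure Ω, 1 - normSq (u x) ∈ Iic (1:ℝ) := fun x hx =>
    Set.mem_Iic.mpr (by nlinarith [normSq_nonneg (u x)])
  have hmapsv : ∀ x ∈ closure Ω, 1 - normSq (v x) ∈ Iic (1:ℝ) := fun x hx =>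
    Set.mem_Iic.mpr (by nlinarith [normSq_nonneg (v x)])
  have hccl : ContinuousOn c (closure Ω) := by
    rw [hcdef]; exact (Wd_contOn hW).comp h1mu hmapsu
  have hWucl : ContinuousOn (fun x => W (1 - normSq (u x))) (closure Ω) :=
    hW.continuousOn.comp h1mu hmapsu
  have hWvcl : ContinuousOn (fun x => W (1 - normSq (v x))) (closure Ω) :=
    hW.continuousOn.comp h1mv hmapsv
  obtain ⟨CWu, _, hCWu⟩ := exists_bound_closure hΩb hWucl
  obtain ⟨CWv, _, hCWv⟩ := exists_bound_closure hΩb hWvcl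
  have hWuint : IntegrableOn (fun x => W (1 - normSq (u x))) Ω :=
    integrableOn_of_bounded hΩo hΩb ((hWucl.mono hsub).aestronglyMeasurable hmeasΩ)
      (fun x hx => hCWu x (hsub hx))
  have hWvint : IntegrableOn (fun x => W (1 - normSq (v x))) Ω :=
    integrableOn_of_bounded hΩo hΩb ((hWvcl.mono hsub).aestronglyMeasurable hmeasΩ)
      (fun x hx => hCWv x (hsub hx))
  -- integrability of the mixed terms
  have hIdot : IntegrableOn (gradDot u z) Ω := by
    refine Integrable.mono' ((hugrad.add hzgradint).div_const 2)
      (gradDot_meas u z).aestronglyMeasurable ?_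
    exact Filter.Eventually.of_forall fun x => by
      rw [Real.norm_eq_abs]; exact abs_gradDot_le u z x
  have hdotcl : ContinuousOn (fun x => dotR (u x) (z x)) (closure Ω) := by
    unfold dotR
    exact continuousOn_finset_sum _ fun j _ =>
      ((continuous_apply j).comp_continuousOn hucl).mul
        ((continuous_apply j).comp_continuousOn hzcl)
  have hcdotcl : ContinuousOn (fun x => c x * dotR (u x) (z x)) (closure Ω) :=
    hccl.mul hdotcl
  obtain ⟨C1, _, hC1⟩ := exists_bound_closure hΩb hcdotcl
  have hJ2int : IntegrableOn (fun x => c x * dotR (u x) (z x)) Ω :=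
    integrableOn_of_bounded hΩo hΩb ((hcdotcl.mono hsub).aestronglyMeasurable hmeasΩ)
      (fun x hx => hC1 x (hsub hx))
  have hcnzcl : ContinuousOn (fun x => c x * normSq (z x)) (closure Ω) := hccl.mul hzsqcl
  obtain ⟨C2, _, hC2⟩ := exists_bound_closure hΩb hcnzcl
  have hJ4int : IntegrableOn (fun x => c x * normSq (z x)) Ω :=
    integrableOn_of_bounded hΩo hΩb ((hcnzcl.mono hsub).aestronglyMeasurable hmeasΩ)
      (fun x hx => hC2 x (hsub hx))
  have hI2int : IntegrableOn (fun x => 1 / ε ^ 2 * c x * dotR (u x) (z x)) Ω := by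
    have h := hJ2int.const_mul (1 / ε ^ 2)
    exact (integrable_congr (Filter.Eventually.of_forall fun x => by ring)).mpr h
  -- criticality with test function z
  have hcritz := huC z hzH10
  have hIeq : (∫ x in Ω, gradDot u z x)
      = ∫ x in Ω, 1 / ε ^ 2 * c x * dotR (u x) (z x) := by
    have h3 : (∫ x in Ω, (gradDot u z x - 1 / ε ^ 2 * c x * dotR (u x) (z x)))
        = (∫ x in Ω, gradDot u z x) - ∫ x in Ω, 1 / ε ^ 2 * c x * dotR (u x) (z x) :=
      integral_sub hIdot hI2int
    rw [hcritz] at h3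
    linarith
  -- per-coordinate gradient integrability
  have hζgradintj : ∀ j : Fin n, IntegrableOn (gradSqS fun y => z y j) Ω := by
    intro j
    refine Integrable.mono' hzgradint (gradDotS_meas _ _).aestronglyMeasurable ?_
    rw [ae_restrict_iff' hmeasΩ]
    refine Filter.Eventually.of_forall fun x hx => ?_
    rw [Real.norm_eq_abs, abs_of_nonneg (gradSqS_nonneg _ x)]
    unfold gradSqS gradDotS gradSq gradDot
    refine Finset.sum_le_sum fun i _ => ?_
    rw [fderiv_coord (hzdiff x hx) j]
    exact Finset.single_le_sum
      (f := fun j' => fderiv ℝ z x (Pi.single i (1:ℝ)) j' * fderiv ℝ z x (Pi.single i (1:ℝ)) j')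
      (fun j' _ => mul_self_nonneg _) (Finset.mem_univ j)
  -- apply Step D to each coordinate of z
  have hstep : ∀ j : Fin n, (∫ x in Ω, 1 / ε ^ 2 * c x * (z x j) ^ 2)
      ≤ ∫ x in Ω, gradSqS (fun y => z y j) x := by
    intro j
    have hζ1 : ContDiffOn ℝ 1 (fun y => z y j) Ω :=
      (ContinuousLinearMap.proj (R := ℝ) (φ := fun _ : Fin n => ℝ) j).contDiff.comp_contDiffOn hz1
    have hζcl : ContinuousOn (fun y => z y j) (closure Ω) :=
      (continuous_apply j).comp_continuousOn hzcl
    have hζ0 : EqOn (fun y => z y j) 0 (frontier Ω) := fun x hx => by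
      have h := hz0 hx
      simp only [Pi.zero_apply] at h ⊢
      rw [h]; rfl
    exact stepD hΩo hΩb hW hε huC hu1 hucl hugrad he hupos hζ1 hζcl hζ0 (hζgradintj j)
  -- sum up
  have hIjint : ∀ j : Fin n, IntegrableOn (fun x => 1 / ε ^ 2 * c x * (z x j) ^ 2) Ω := by
    intro j
    have hcont : ContinuousOn (fun x => 1 / ε ^ 2 * c x * (z x j) ^ 2) (closure Ω) :=
      (continuousOn_const.mul hccl).mul (((continuous_apply j).comp_continuousOn hzcl).pow 2)
    obtain ⟨C3, _, hC3⟩ := exists_bound_closure hΩb hcont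
    exact integrableOn_of_bounded hΩo hΩb ((hcont.mono hsub).aestronglyMeasurable hmeasΩ)
      (fun x hx => hC3 x (hsub hx))
  have hI4int : IntegrableOn (fun x => 1 / ε ^ 2 * c x * normSq (z x)) Ω := by
    have h := hJ4int.const_mul (1 / ε ^ 2)
    exact (integrable_congr (Filter.Eventually.of_forall fun x => by ring)).mpr h
  have hsumL : (∫ x in Ω, 1 / ε ^ 2 * c x * normSq (z x))
      = ∑ j : Fin n, ∫ x in Ω, 1 / ε ^ 2 * c x * (z x j) ^ 2 := by
    rw [← integral_finset_sum _ (fun j _ => hIjint j)]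
    refine setIntegral_congr_fun hmeasΩ fun x _ => ?_
    rw [← Finset.mul_sum]
    rfl
  have hsumR : (∫ x in Ω, gradSq z x)
      = ∑ j : Fin n, ∫ x in Ω, gradSqS (fun y => z y j) x := by
    rw [← integral_finset_sum _ (fun j _ => hζgradintj j)]
    refine setIntegral_congr_fun hmeasΩ fun x hx => ?_
    unfold gradSq gradDot gradSqS gradDotS
    rw [Finset.sum_comm]
    refine Finset.sum_congr rfl fun j _ => Finset.sum_congr rfl fun i _ => ?_
    rw [fderiv_coord (hzdiff x hx) j]
  have hquad : (∫ x in Ω, 1 / ε ^ 2 * c x * normSq (z x)) ≤ ∫ x in Ω, gradSq z x := by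
    rw [hsumL, hsumR]
    exact Finset.sum_le_sum fun j _ => hstep j
  -- the two expansion identities
  have hgsid : ∀ x ∈ Ω, gradSq v x = gradSq u x + (2 * gradDot u z x + gradSq z x) := by
    intro x hx
    unfold gradSq gradDot
    rw [Finset.mul_sum, ← Finset.sum_add_distrib, ← Finset.sum_add_distrib]
    refine Finset.sum_congr rfl fun i _ => ?_
    rw [Finset.mul_sum, ← Finset.sum_add_distrib, ← Finset.sum_add_distrib]
    refine Finset.sum_congr rfl fun j _ => ?_
    rw [hfz x hx]
    simp only [ContinuousLinearMap.coe_sub', Pi.sub_apply]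
    ring
  have hnsid : ∀ x : Fin m → ℝ,
      normSq (v x) = normSq (u x) + (2 * dotR (u x) (z x) + normSq (z x)) := by
    intro x
    unfold normSq dotR
    rw [Finset.mul_sum, ← Finset.sum_add_distrib, ← Finset.sum_add_distrib]
    refine Finset.sum_congr rfl fun j _ => ?_
    have hzj : z x j = v x j - u x j := rfl
    rw [hzj]
    ring
  -- expansion of the Dirichlet energy of v
  have hGv : (∫ x in Ω, gradSq v x)
      = (∫ x in Ω, gradSq u x) + (2 * (∫ x in Ω, gradDot u z x) + ∫ x in Ω, gradSq z x) := by
    have h1 : (∫ x in Ω, gradSq v x)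
        = ∫ x in Ω, (gradSq u x + (2 * gradDot u z x + gradSq z x)) :=
      setIntegral_congr_fun hmeasΩ fun x hx => hgsid x hx
    calc (∫ x in Ω, gradSq v x)
        = ∫ x in Ω, (gradSq u x + (2 * gradDot u z x + gradSq z x)) := h1
      _ = (∫ x in Ω, gradSq u x) + ∫ x in Ω, (2 * gradDot u z x + gradSq z x) :=
          integral_add hugrad ((hIdot.const_mul 2).add hzgradint)
      _ = (∫ x in Ω, gradSq u x)
          + ((∫ x in Ω, 2 * gradDot u z x) + ∫ x in Ω, gradSq z x) :=
          congrArg (fun t => (∫ x in Ω, gradSq u x) + t)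
            (integral_add (hIdot.const_mul 2) hzgradint)
      _ = (∫ x in Ω, gradSq u x)
          + (2 * (∫ x in Ω, gradDot u z x) + ∫ x in Ω, gradSq z x) := by
          rw [integral_const_mul]
  -- the convexity inequality for the potential term
  have hWptw : ∀ x ∈ Ω, -(2 * (c x * dotR (u x) (z x)) + c x * normSq (z x))
      ≤ W (1 - normSq (v x)) - W (1 - normSq (u x)) := by
    intro x hx
    have ht := tangent_le hW hWconv.convexOn (s := 1 - normSq (v x)) (t := 1 - normSq (u x))
      (by nlinarith [normSq_nonneg (v x)]) (by nlinarith [normSq_nonneg (u x)])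
    have hdelta : 1 - normSq (v x) - (1 - normSq (u x))
        = -(2 * dotR (u x) (z x) + normSq (z x)) := by
      rw [hnsid x]; ring
    rw [hdelta] at ht
    have hceq : c x = Wd W (1 - normSq (u x)) := rfl
    have hring : Wd W (1 - normSq (u x)) * -(2 * dotR (u x) (z x) + normSq (z x))
        = -(2 * (Wd W (1 - normSq (u x)) * dotR (u x) (z x))
          + Wd W (1 - normSq (u x)) * normSq (z x)) := by ring
    rw [hceq]
    linarith [ht, hring]
  have hWineq : -(2 * (∫ x in Ω, c x * dotR (u x) (z x)) + ∫ x in Ω, c x * normSq (z x))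
      ≤ (∫ x in Ω, W (1 - normSq (v x))) - ∫ x in Ω, W (1 - normSq (u x)) := by
    have hL : IntegrableOn
        (fun x => -(2 * (c x * dotR (u x) (z x)) + c x * normSq (z x))) Ω :=
      ((hJ2int.const_mul 2).add hJ4int).neg
    have hR : IntegrableOn
        (fun x => W (1 - normSq (v x)) - W (1 - normSq (u x))) Ω := hWvint.sub hWuint
    have hmono := setIntegral_mono_on hL hR hmeasΩ hWptw
    have hLc : (∫ x in Ω, -(2 * (c x * dotR (u x) (z x)) + c x * normSq (z x)))
        = -(2 * (∫ x in Ω, c x * dotR (u x) (z x)) + ∫ x in Ω, c x * normSq (z x)) := by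
      rw [integral_neg, integral_add (hJ2int.const_mul 2) hJ4int, integral_const_mul]
    have hRc : (∫ x in Ω, (W (1 - normSq (v x)) - W (1 - normSq (u x))))
        = (∫ x in Ω, W (1 - normSq (v x))) - ∫ x in Ω, W (1 - normSq (u x)) :=
      integral_sub hWvint hWuint
    rw [hLc, hRc] at hmono
    exact hmono
  -- rewrite the 1/ε² integrals
  have hI2J2 : (∫ x in Ω, 1 / ε ^ 2 * c x * dotR (u x) (z x))
      = 1 / ε ^ 2 * ∫ x in Ω, c x * dotR (u x) (z x) := by
    rw [← integral_const_mul]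
    exact setIntegral_congr_fun hmeasΩ fun x _ => by ring
  have hQJ4 : (∫ x in Ω, 1 / ε ^ 2 * c x * normSq (z x))
      = 1 / ε ^ 2 * ∫ x in Ω, c x * normSq (z x) := by
    rw [← integral_const_mul]
    exact setIntegral_congr_fun hmeasΩ fun x _ => by ring
  -- energies
  have hEu : GLenergy W ε Ω u
      = (∫ x in Ω, gradSq u x) / 2 + (∫ x in Ω, W (1 - normSq (u x))) / (2 * ε ^ 2) := by
    unfold GLenergy
    rw [integral_add (hugrad.div_const 2) (hWuint.div_const (2 * ε ^ 2)),
      integral_div, integral_div]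
  have hEv : GLenergy W ε Ω v
      = (∫ x in Ω, gradSq v x) / 2 + (∫ x in Ω, W (1 - normSq (v x))) / (2 * ε ^ 2) := by
    unfold GLenergy
    rw [integral_add (hvgrad.div_const 2) (hWvint.div_const (2 * ε ^ 2)),
      integral_div, integral_div]
  -- final arithmetic
  set Gu := ∫ x in Ω, gradSq u x
  set Gv := ∫ x in Ω, gradSq v x
  set I1 := ∫ x in Ω, gradDot u z x
  set Zg := ∫ x in Ω, gradSq z x
  set J2 := ∫ x in Ω, c x * dotR (u x) (z x)
  set J4 := ∫ x in Ω, c x * normSq (z x)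
  set Wu := ∫ x in Ω, W (1 - normSq (u x))
  set Wv := ∫ x in Ω, W (1 - normSq (v x))
  rw [hEu, hEv, hGv]
  rw [hI2J2] at hIeq
  rw [hQJ4] at hquad
  -- goal : Gu/2 + Wu/(2ε²) ≤ (Gu + (2*I1 + Zg))/2 + Wv/(2ε²)
  have hWdiv : (Wu - Wv) / (2 * ε ^ 2) ≤ (2 * J2 + J4) / (2 * ε ^ 2) := by
    have h : Wu - Wv ≤ 2 * J2 + J4 := by linarith
    gcongr
  have hsplit : (2 * J2 + J4) / (2 * ε ^ 2) = 1 / ε ^ 2 * J2 + (1 / ε ^ 2 * J4) / 2 := by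
    field_simp
  have hdist : (Wu - Wv) / (2 * ε ^ 2) = Wu / (2 * ε ^ 2) - Wv / (2 * ε ^ 2) := sub_div _ _ _
  linarith [hWdiv, hsplit, hIeq, hquad, hdist]
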